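/- Every rigid analytic function φ ∈ 𝕋 (power series over ℂ_∞ converging on the closed unit disc) satisfying the difference equation τ(φ) = (t − θ)·φ, where τ raises coefficients to the q-th power, is an 𝔽_q[t]-multiple of the Anderson–Thakur function ω(t) := ι · ∏_{j≥0} (1 − t/θ^{q^j})^{-1}; i.e., the solution set is the free rank-one 𝔽_q[t]-module generated by ω. -/

import Mathlib

noncomputable section
open Polynomial Filter

variable (Fq : Type) [Field Fq] [Fintype Fq]
variable (Cinf : Type) [NontriviallyNormedField Cinf] [CompleteSpace Cinf]
  [IsAlgClosed Cinf] [IsUltrametricDist Cinf] [Algebra Fq Cinf]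

/-- The Frobenius twist `τ` on the Tate algebra, acting on (power series)
coefficients by the `q`-power map. -/
def tw (φ : PowerSeries Cinf) : PowerSeries Cinf :=
  PowerSeries.mk fun n => (PowerSeries.coeff n φ) ^ (Fintype.card Fq)

/-- Membership in the Tate algebra `𝕋`: a power series over `ℂ_∞` lies in `𝕋`
iff its coefficients tend to `0`, i.e. it converges on the closed unit disc. -/
def IsTate (φ : PowerSeries Cinf) : Prop :=
  Tendsto (fun n => PowerSeries.coeff n φ) atTop (nhds 0)

/-- Convergence of a sequence of power series with respect to the Gauss norm. -/
def GaussTendsto (F : ℕ → PowerSeries Cinf) (φ : PowerSeries Cinf) : Prop :=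
  ∀ ε > (0 : ℝ), ∃ N, ∀ m ≥ N, ∀ n : ℕ, ‖PowerSeries.coeff n (F m - φ)‖ < ε

/-- The `N`-th partial product `ι ∏_{j<N} (1 - t/θ^{q^j})⁻¹` of the Anderson–Thakur
function, each factor expanded as the geometric series `∑_n θ^{-n q^j} t^n ∈ 𝕋`. -/
def omegaPartial (θc ι : Cinf) (N : ℕ) : PowerSeries Cinf :=
  PowerSeries.C ι *
    ∏ j ∈ Finset.range N, PowerSeries.mk fun n => ((θc ^ (Fintype.card Fq) ^ j)⁻¹) ^ n

set_option linter.unusedSectionVars false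

section Aux
open PowerSeries
variable {Fq Cinf}

lemma AT.exists_frob : ∃ F : Cinf →+* Cinf, ∀ x, F x = x ^ Fintype.card Fq := by
  haveI : CharP Fq (ringChar Fq) := ringChar.charP Fq
  obtain ⟨n, hp, hcard⟩ := FiniteField.card Fq (ringChar Fq)
  haveI : CharP Cinf (ringChar Fq) :=
    charP_of_injective_algebraMap (algebraMap Fq Cinf).injective (ringChar Fq)
  haveI : Fact (Nat.Prime (ringChar Fq)) := ⟨hp⟩
  exact ⟨iterateFrobenius Cinf (ringChar Fq) n,
    fun x => by rw [hcard]; exact iterateFrobenius_def ..⟩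

lemma AT.geom_inv (r : Cinf) :
    (PowerSeries.mk fun n => r ^ n) * (1 - PowerSeries.C r * PowerSeries.X) = 1 := by
  ext n
  rw [mul_sub, mul_one, map_sub, ← mul_assoc]
  cases n with
  | zero => simp
  | succ n =>
      rw [coeff_succ_mul_X, PowerSeries.coeff_mul_C, coeff_mk, coeff_mk]
      simp [pow_succ, mul_comm]

lemma AT.tw_map {F : Cinf →+* Cinf} (hF : ∀ x, F x = x ^ Fintype.card Fq)
    (φ : PowerSeries Cinf) : tw Fq Cinf φ = PowerSeries.map F φ := by
  ext n
  simp [tw, PowerSeries.coeff_map, hF]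

lemma AT.partial_eq (θc ι : Cinf) (hθ0 : θc ≠ 0)
    (hι : ι ^ (Fintype.card Fq - 1) + θc = 0) (N : ℕ) :
    tw Fq Cinf (omegaPartial Fq Cinf θc ι N) *
      (1 - PowerSeries.C ((θc ^ (Fintype.card Fq) ^ N)⁻¹) * PowerSeries.X) =
    (PowerSeries.X - PowerSeries.C θc) * omegaPartial Fq Cinf θc ι N := by
  set q := Fintype.card Fq with hqdef
  have hq : 1 < q := Fintype.one_lt_card
  obtain ⟨F, hF⟩ := AT.exists_frob (Fq := Fq) (Cinf := Cinf)
  set g : ℕ → PowerSeries Cinf := fun j => PowerSeries.mk fun n => ((θc ^ q ^ j)⁻¹) ^ n with hg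
  have hginv : ∀ j, g j * (1 - PowerSeries.C ((θc ^ q ^ j)⁻¹) * PowerSeries.X) = 1 :=
    fun j => AT.geom_inv _
  have hgne : ∀ j, g j ≠ 0 := fun j => left_ne_zero_of_mul_eq_one (hginv j)
  have htwg : ∀ j, PowerSeries.map F (g j) = g (j + 1) := by
    intro j
    ext n
    rw [PowerSeries.coeff_map, hg]
    simp only [coeff_mk]
    rw [map_pow, map_inv₀, map_pow, hF, ← pow_mul, ← pow_succ']
  have homega : omegaPartial Fq Cinf θc ι N =
      PowerSeries.C ι * ∏ j ∈ Finset.range N, g j := rfl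
  have key : (∏ j ∈ Finset.range N, g (j + 1)) * g 0 = g N * ∏ j ∈ Finset.range N, g j := by
    rw [← Finset.prod_range_succ', Finset.prod_range_succ, mul_comm]
  have h1 : (1 - PowerSeries.C ((θc ^ q ^ N)⁻¹) * PowerSeries.X) * g N = 1 := by
    rw [mul_comm]; exact hginv N
  have h0 : (1 - PowerSeries.C θc⁻¹ * PowerSeries.X) * g 0 = 1 := by
    rw [mul_comm]
    have := hginv 0
    rwa [pow_zero, pow_one] at this
  have hιθ : ι ^ (q - 1) = -θc := eq_neg_of_add_eq_zero_left hι
  have hXfac : (PowerSeries.X - PowerSeries.C θc) =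
      PowerSeries.C (ι ^ (q - 1)) * (1 - PowerSeries.C θc⁻¹ * PowerSeries.X) := by
    rw [hιθ, map_neg, neg_mul, mul_sub, mul_one, ← mul_assoc, ← map_mul,
      mul_inv_cancel₀ hθ0, map_one, one_mul, neg_sub]
  have hιq : ι ^ (q - 1) * ι = ι ^ q := by
    rw [← pow_succ, Nat.sub_add_cancel hq.le]
  have hX : (PowerSeries.X - PowerSeries.C θc) * (PowerSeries.C ι * g 0) =
      PowerSeries.C (ι ^ q) := by
    rw [hXfac]
    calc PowerSeries.C (ι ^ (q - 1)) * (1 - PowerSeries.C θc⁻¹ * PowerSeries.X) *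
          (PowerSeries.C ι * g 0)
        = PowerSeries.C (ι ^ (q - 1)) * PowerSeries.C ι *
            ((1 - PowerSeries.C θc⁻¹ * PowerSeries.X) * g 0) := by ring
      _ = PowerSeries.C (ι ^ q) := by rw [h0, mul_one, ← map_mul, hιq]
  have htw : tw Fq Cinf (omegaPartial Fq Cinf θc ι N) =
      PowerSeries.C (ι ^ q) * ∏ j ∈ Finset.range N, g (j + 1) := by
    rw [AT.tw_map hF, homega, map_mul, PowerSeries.map_C, hF, map_prod]
    simp_rw [htwg]
    rfl
  apply mul_right_cancel₀ (mul_ne_zero (hgne N) (hgne 0))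
  rw [htw, homega]
  linear_combination (PowerSeries.C (ι ^ q) * (∏ j ∈ Finset.range N, g (j + 1)) * g 0) * h1 +
    PowerSeries.C (ι ^ q) * key - (g N * ∏ j ∈ Finset.range N, g j) * hX

lemma AT.norm_coeff_prod_le (θc : Cinf) (hθ : ‖θc‖ = (Fintype.card Fq : ℝ)) (N k : ℕ) :
    ‖PowerSeries.coeff k
      (∏ j ∈ Finset.range N, PowerSeries.mk fun n => ((θc ^ (Fintype.card Fq) ^ j)⁻¹) ^ n)‖ ≤
      ((Fintype.card Fq : ℝ)⁻¹) ^ k := by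
  set q := Fintype.card Fq with hqdef
  have hq : 1 < q := Fintype.one_lt_card
  have hqR : (1:ℝ) < (q:ℝ) := by exact_mod_cast hq
  have hqpos : (0:ℝ) < q := by linarith
  induction N generalizing k with
  | zero =>
      simp only [Finset.range_zero, Finset.prod_empty]
      rcases k with _ | m
      · simp
      · simp only [PowerSeries.coeff_one, Nat.succ_ne_zero, if_false, norm_zero]
        positivity
  | succ N ih =>
      rw [Finset.prod_range_succ, PowerSeries.coeff_mul]
      apply IsUltrametricDist.norm_sum_le_of_forall_le_of_nonneg (by positivity)
      rintro ⟨i, j⟩ hij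
      rw [Finset.HasAntidiagonal.mem_antidiagonal] at hij
      have hterm : ‖PowerSeries.coeff j
          (PowerSeries.mk fun n => ((θc ^ q ^ N)⁻¹) ^ n)‖ ≤ ((q:ℝ)⁻¹) ^ j := by
        rw [PowerSeries.coeff_mk, norm_pow, norm_inv, norm_pow, hθ]
        apply pow_le_pow_left₀ (by positivity)
        rw [inv_le_inv₀ (by positivity) (by positivity)]
        have : q ≤ q ^ q ^ N := le_self_pow₀ hq.le (by positivity)
        exact_mod_cast this
      rw [norm_mul]
      calc _ ≤ ((q:ℝ)⁻¹) ^ i * ((q:ℝ)⁻¹) ^ j :=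
            mul_le_mul (ih i) hterm (norm_nonneg _) (by positivity)
        _ = ((q:ℝ)⁻¹) ^ k := by rw [← pow_add]; exact congrArg _ hij

lemma AT.norm_coeff_partial_le (θc ι : Cinf) (hθ : ‖θc‖ = (Fintype.card Fq : ℝ)) (N k : ℕ) :
    ‖PowerSeries.coeff k (omegaPartial Fq Cinf θc ι N)‖ ≤
      ‖ι‖ * ((Fintype.card Fq : ℝ)⁻¹) ^ k := by
  rw [omegaPartial, PowerSeries.coeff_C_mul, norm_mul]
  exact mul_le_mul_of_nonneg_left (AT.norm_coeff_prod_le θc hθ N k) (norm_nonneg _)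

lemma AT.tendsto_coeff {θc ι : Cinf} {ω : PowerSeries Cinf}
    (hω : GaussTendsto Cinf (omegaPartial Fq Cinf θc ι) ω) (n : ℕ) :
    Tendsto (fun N => PowerSeries.coeff n (omegaPartial Fq Cinf θc ι N)) atTop
      (nhds (PowerSeries.coeff n ω)) := by
  rw [Metric.tendsto_atTop]
  intro ε hε
  obtain ⟨N, hN⟩ := hω ε hε
  exact ⟨N, fun m hm => by rw [dist_eq_norm, ← map_sub]; exact hN m hm n⟩

lemma AT.norm_coeff_omega_le {θc ι : Cinf} {ω : PowerSeries Cinf}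
    (hθ : ‖θc‖ = (Fintype.card Fq : ℝ))
    (hω : GaussTendsto Cinf (omegaPartial Fq Cinf θc ι) ω) (k : ℕ) :
    ‖PowerSeries.coeff k ω‖ ≤ ‖ι‖ * ((Fintype.card Fq : ℝ)⁻¹) ^ k :=
  le_of_tendsto ((AT.tendsto_coeff hω k).norm)
    (Eventually.of_forall fun N => AT.norm_coeff_partial_le θc ι hθ N k)

lemma AT.coeff_zero_omega {θc ι : Cinf} {ω : PowerSeries Cinf}
    (hω : GaussTendsto Cinf (omegaPartial Fq Cinf θc ι) ω) :
    PowerSeries.coeff 0 ω = ι := by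
  have h0 : ∀ N, PowerSeries.coeff 0 (omegaPartial Fq Cinf θc ι N) = ι := by
    intro N
    rw [omegaPartial, PowerSeries.coeff_zero_eq_constantCoeff, map_mul, map_prod,
      PowerSeries.constantCoeff_C]
    simp
  have := AT.tendsto_coeff hω 0
  simp_rw [h0] at this
  exact tendsto_nhds_unique this tendsto_const_nhds

lemma AT.tw_omega (θc ι : Cinf) (hθ : ‖θc‖ = (Fintype.card Fq : ℝ))
    (hι : ι ^ (Fintype.card Fq - 1) + θc = 0) (ω : PowerSeries Cinf)
    (hω : GaussTendsto Cinf (omegaPartial Fq Cinf θc ι) ω) :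
    tw Fq Cinf ω = (PowerSeries.X - PowerSeries.C θc) * ω := by
  set q := Fintype.card Fq with hqdef
  have hq : 1 < q := Fintype.one_lt_card
  have hqR : (1:ℝ) < (q:ℝ) := by exact_mod_cast hq
  have hθ0 : θc ≠ 0 := by
    intro h
    rw [h, norm_zero] at hθ
    have : (0:ℝ) < (q:ℝ) := by linarith
    rw [← hθ] at this
    exact lt_irrefl _ this
  have hιθ : ι ^ (q - 1) = -θc := eq_neg_of_add_eq_zero_left hι
  have hιq : ι ^ q = -θc * ι := by
    rw [← hιθ, ← pow_succ, Nat.sub_add_cancel hq.le]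
  ext n
  rcases n with _ | m
  · -- constant coefficient: direct computation
    rw [tw, PowerSeries.coeff_mk, PowerSeries.coeff_zero_eq_constantCoeff, map_mul, map_sub,
      PowerSeries.constantCoeff_X, PowerSeries.constantCoeff_C,
      ← PowerSeries.coeff_zero_eq_constantCoeff, AT.coeff_zero_omega hω, hιq]
    ring
  · -- higher coefficients: pass to the limit in the partial-product identity
    have s1 : Tendsto (fun N => (PowerSeries.coeff (m+1) (omegaPartial Fq Cinf θc ι N)) ^ q)
        atTop (nhds ((PowerSeries.coeff (m+1) ω) ^ q)) :=
      (AT.tendsto_coeff hω (m+1)).pow q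
    have s2 : Tendsto (fun N => PowerSeries.coeff m (omegaPartial Fq Cinf θc ι N)
          - θc * PowerSeries.coeff (m+1) (omegaPartial Fq Cinf θc ι N)) atTop
        (nhds (PowerSeries.coeff m ω - θc * PowerSeries.coeff (m+1) ω)) :=
      (AT.tendsto_coeff hω m).sub ((AT.tendsto_coeff hω (m+1)).const_mul θc)
    have err : Tendsto (fun N => (PowerSeries.coeff m (omegaPartial Fq Cinf θc ι N)) ^ q
          * (θc ^ q ^ N)⁻¹) atTop (nhds 0) := by
      apply squeeze_zero_norm (a := fun N => ‖ι‖ ^ q * ((q:ℝ)⁻¹) ^ N)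
      · intro N
        rw [norm_mul, norm_pow, norm_inv, norm_pow, hθ]
        have h1 : ‖PowerSeries.coeff m (omegaPartial Fq Cinf θc ι N)‖ ^ q ≤ ‖ι‖ ^ q := by
          apply pow_le_pow_left₀ (norm_nonneg _)
          refine (AT.norm_coeff_partial_le θc ι hθ N m).trans ?_
          calc ‖ι‖ * ((q:ℝ)⁻¹) ^ m ≤ ‖ι‖ * 1 := by
                apply mul_le_mul_of_nonneg_left _ (norm_nonneg _)
                exact pow_le_one₀ (by positivity) (by rw [inv_le_one_iff₀]; right; linarith)
            _ = ‖ι‖ := mul_one _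
        have h2 : ((q:ℝ) ^ q ^ N)⁻¹ ≤ ((q:ℝ)⁻¹) ^ N := by
          rw [inv_pow, inv_le_inv₀ (by positivity) (by positivity)]
          calc ((q:ℝ)) ^ N ≤ ((q:ℝ)) ^ q ^ N := by
                apply pow_le_pow_right₀ hqR.le
                exact (Nat.lt_pow_self (n := N) hq).le
            _ = ((q:ℝ)) ^ q ^ N := rfl
        exact mul_le_mul h1 h2 (by positivity) (by positivity)
      · have h3 : Tendsto (fun N : ℕ => ((q:ℝ)⁻¹) ^ N) atTop (nhds 0) :=
          tendsto_pow_atTop_nhds_zero_of_lt_one (by positivity)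
            (by rw [inv_lt_one_iff₀]; right; exact hqR)
        simpa using h3.const_mul (‖ι‖ ^ q)
    have hid : ∀ N, (PowerSeries.coeff (m+1) (omegaPartial Fq Cinf θc ι N)) ^ q =
        (PowerSeries.coeff m (omegaPartial Fq Cinf θc ι N)
          - θc * PowerSeries.coeff (m+1) (omegaPartial Fq Cinf θc ι N))
        + (PowerSeries.coeff m (omegaPartial Fq Cinf θc ι N)) ^ q * (θc ^ q ^ N)⁻¹ := by
      intro N
      have h := AT.partial_eq θc ι hθ0 hι N
      have hcoeff := congrArg (PowerSeries.coeff (m+1)) h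
      rw [mul_sub, mul_one, sub_mul, map_sub, map_sub, ← mul_assoc,
        mul_comm PowerSeries.X (omegaPartial Fq Cinf θc ι N)] at hcoeff
      rw [coeff_succ_mul_X, coeff_succ_mul_X, PowerSeries.coeff_mul_C,
        PowerSeries.coeff_C_mul] at hcoeff
      simp only [tw, PowerSeries.coeff_mk, ← hqdef] at hcoeff
      linear_combination hcoeff
    have : Tendsto (fun N => (PowerSeries.coeff (m+1) (omegaPartial Fq Cinf θc ι N)) ^ q)
        atTop (nhds ((PowerSeries.coeff m ω - θc * PowerSeries.coeff (m+1) ω) + 0)) := by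
      simp_rw [hid]
      exact s2.add err
    have hfinal := tendsto_nhds_unique s1 this
    rw [tw, PowerSeries.coeff_mk, hfinal, sub_mul, map_sub]
    rw [mul_comm PowerSeries.X ω, coeff_succ_mul_X, PowerSeries.coeff_C_mul, add_zero]

lemma AT.norm_algebraMap_le (e : Fq) : ‖algebraMap Fq Cinf e‖ ≤ 1 := by
  rcases eq_or_ne e 0 with rfl | he
  · simp
  · have h1 : (algebraMap Fq Cinf e) ^ (Fintype.card Fq - 1) = 1 := by
      rw [← map_pow, FiniteField.pow_card_sub_one_eq_one e he, map_one]
    have h2 : ‖algebraMap Fq Cinf e‖ ^ (Fintype.card Fq - 1) = 1 := by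
      rw [← norm_pow, h1, norm_one]
    have hq : 1 < Fintype.card Fq := Fintype.one_lt_card
    by_contra hlt
    push_neg at hlt
    have := one_lt_pow₀ hlt (by omega : Fintype.card Fq - 1 ≠ 0)
    rw [h2] at this
    exact lt_irrefl _ this

lemma AT.norm_algebraMap_eq (e : Fq) (he : e ≠ 0) : ‖algebraMap Fq Cinf e‖ = 1 := by
  have h1 : (algebraMap Fq Cinf e) ^ (Fintype.card Fq - 1) = 1 := by
    rw [← map_pow, FiniteField.pow_card_sub_one_eq_one e he, map_one]
  have h2 : ‖algebraMap Fq Cinf e‖ ^ (Fintype.card Fq - 1) = 1 := by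
    rw [← norm_pow, h1, norm_one]
  have hq : 1 < Fintype.card Fq := Fintype.one_lt_card
  rcases lt_trichotomy ‖algebraMap Fq Cinf e‖ 1 with h | h | h
  · have := pow_lt_one₀ (norm_nonneg _) h (by omega : Fintype.card Fq - 1 ≠ 0)
    rw [h2] at this; exact absurd this (lt_irrefl _)
  · exact h
  · have := one_lt_pow₀ h (by omega : Fintype.card Fq - 1 ≠ 0)
    rw [h2] at this; exact absurd this (lt_irrefl _)

lemma AT.root_pow_card (x : Cinf) (hx : x ^ (Fintype.card Fq) = x) :
    ∃ e : Fq, algebraMap Fq Cinf e = x := by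
  set q := Fintype.card Fq with hqdef
  have hq : 1 < q := Fintype.one_lt_card
  by_contra hcon
  push_neg at hcon
  classical
  set R : Finset Cinf := Finset.image (algebraMap Fq Cinf) Finset.univ with hR
  have hinj : Function.Injective (algebraMap Fq Cinf) := (algebraMap Fq Cinf).injective
  have hcard : R.card = q := by
    rw [hR, Finset.card_image_of_injective _ hinj, Finset.card_univ]
  have hxR : x ∉ R := by
    intro hmem
    rw [hR, Finset.mem_image] at hmem
    obtain ⟨e, _, he⟩ := hmem
    exact hcon e he
  set P : Polynomial Cinf := Polynomial.X ^ q - Polynomial.X with hP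
  have hPne : P ≠ 0 := by
    intro h
    have : P.coeff q = 1 := by
      rw [hP]
      simp only [hP, Polynomial.coeff_sub, Polynomial.coeff_X_pow, Polynomial.coeff_X, if_pos rfl]
      rw [if_neg (by omega : ¬ 1 = q), if_pos trivial]
      ring
    rw [h] at this
    simp at this
  have hroots : (insert x R).val ⊆ P.roots := by
    intro y hy
    rw [Finset.insert_val] at hy
    have hy' : y = x ∨ y ∈ R := by
      rcases Multiset.mem_ndinsert.mp hy with h | h
      · exact Or.inl h
      · exact Or.inr h
    rw [Polynomial.mem_roots hPne]
    rcases hy' with rfl | h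
    · rw [hP]; simp [Polynomial.IsRoot, hx]
    · rw [hR, Finset.mem_image] at h
      obtain ⟨e, _, rfl⟩ := h
      rw [hP]
      simp only [Polynomial.IsRoot, Polynomial.eval_sub, Polynomial.eval_pow, Polynomial.eval_X]
      rw [← map_pow, FiniteField.pow_card e, sub_self]
  have hle := Polynomial.card_le_degree_of_subset_roots hroots
  have hcardins : (insert x R).card = q + 1 := by
    rw [Finset.card_insert_of_notMem hxR, hcard]
  have hdeg : P.natDegree ≤ q := by
    rw [hP]
    refine (Polynomial.natDegree_sub_le _ _).trans ?_
    simp [Polynomial.natDegree_X_pow, Polynomial.natDegree_X]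
    omega
  omega

lemma AT.isTate_mul {θc ι : Cinf} {ω : PowerSeries Cinf}
    (hθ : ‖θc‖ = (Fintype.card Fq : ℝ))
    (hω : GaussTendsto Cinf (omegaPartial Fq Cinf θc ι) ω)
    (f : PowerSeries Cinf) (hcoef : ∀ k, ‖PowerSeries.coeff k f‖ ≤ 1)
    (d : ℕ) (hv : ∀ k, d ≤ k → PowerSeries.coeff k f = 0) :
    IsTate Cinf (f * ω) := by
  set q := Fintype.card Fq with hqdef
  have hq : 1 < q := Fintype.one_lt_card
  have hqR : (1:ℝ) < (q:ℝ) := by exact_mod_cast hq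
  apply squeeze_zero_norm (a := fun n => (‖ι‖ * (q:ℝ) ^ d) * ((q:ℝ)⁻¹) ^ n)
  · intro n
    rw [PowerSeries.coeff_mul]
    apply IsUltrametricDist.norm_sum_le_of_forall_le_of_nonneg (by positivity)
    rintro ⟨i, j⟩ hij
    rw [Finset.HasAntidiagonal.mem_antidiagonal] at hij
    rcases le_or_gt d i with hdi | hdi
    · rw [norm_mul, hv i hdi, norm_zero, zero_mul]
      positivity
    · rw [norm_mul]
      calc ‖PowerSeries.coeff i f‖ * ‖PowerSeries.coeff j ω‖
          ≤ 1 * (‖ι‖ * ((q:ℝ)⁻¹) ^ j) :=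
            mul_le_mul (hcoef i) (AT.norm_coeff_omega_le hθ hω j) (norm_nonneg _) zero_le_one
        _ = ‖ι‖ * ((q:ℝ)⁻¹) ^ j := one_mul _
        _ ≤ (‖ι‖ * (q:ℝ) ^ d) * ((q:ℝ)⁻¹) ^ n := by
            have hqi : ((q:ℝ)⁻¹) ^ j = (q:ℝ) ^ i * ((q:ℝ)⁻¹) ^ n := by
              rw [← hij, pow_add]
              field_simp
              rw [← mul_pow, mul_one_div_cancel (ne_of_gt (by linarith)), one_pow]
            rw [hqi]
            have hpi : ((q:ℝ)) ^ i ≤ ((q:ℝ)) ^ d := pow_le_pow_right₀ hqR.le hdi.le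
            have := mul_le_mul_of_nonneg_left hpi (norm_nonneg ι)
            nlinarith [pow_nonneg (by positivity : (0:ℝ) ≤ (q:ℝ)⁻¹) n, norm_nonneg ι]
  · have h3 : Tendsto (fun n : ℕ => ((q:ℝ)⁻¹) ^ n) atTop (nhds 0) :=
      tendsto_pow_atTop_nhds_zero_of_lt_one (by positivity)
        (by rw [inv_lt_one_iff₀]; right; exact hqR)
    simpa using h3.const_mul (‖ι‖ * (q:ℝ) ^ d)

lemma AT.poly_inj : Function.Injective (fun p : Polynomial Fq =>
    ((p.map (algebraMap Fq Cinf) : Polynomial Cinf) : PowerSeries Cinf)) := by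
  intro p1 p2 h
  ext n
  have := congrArg (PowerSeries.coeff n) h
  rw [Polynomial.coeff_coe, Polynomial.coeff_coe, Polynomial.coeff_map, Polynomial.coeff_map]
    at this
  exact (algebraMap Fq Cinf).injective this


end Aux

/-- **(Anderson–Thakur.)** The Anderson–Thakur function
`ω(t) = ι ∏_{j≥0}(1 - t/θ^{q^j})⁻¹ ∈ 𝕋` (the Gauss-norm limit of its partial
products) generates freely, over `𝔽_q[t]`, the module of solutions `φ ∈ 𝕋` of the
difference equation `τ(φ) = (t - θ)·φ`: a power series `φ` lies in `𝕋` and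
satisfies the equation iff `φ = p(t)·ω(t)` for a unique polynomial `p ∈ 𝔽_q[t]`. -/
theorem solutions_of_omega_difference_equation
    (θc : Cinf) (hθ : ‖θc‖ = (Fintype.card Fq : ℝ))
    (ι : Cinf) (hι : ι ^ (Fintype.card Fq - 1) + θc = 0)
    (ω : PowerSeries Cinf) (hω : GaussTendsto Cinf (omegaPartial Fq Cinf θc ι) ω)
    (φ : PowerSeries Cinf) :
    (IsTate Cinf φ ∧ tw Fq Cinf φ = (PowerSeries.X - PowerSeries.C θc) * φ) ↔
      ∃! p : Polynomial Fq, φ = ((p.map (algebraMap Fq Cinf) : Polynomial Cinf) : PowerSeries Cinf) * ω := by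
  classical
  set q := Fintype.card Fq with hqdef
  have hq : 1 < q := Fintype.one_lt_card
  have hqR : (1:ℝ) < (q:ℝ) := by exact_mod_cast hq
  have hθ0 : θc ≠ 0 := by
    intro h
    rw [h, norm_zero] at hθ
    have : (0:ℝ) < (q:ℝ) := by linarith
    rw [← hθ] at this
    exact lt_irrefl _ this
  have hι0 : ι ≠ 0 := by
    intro h
    rw [h, zero_pow (by omega : q - 1 ≠ 0), zero_add] at hι
    exact hθ0 hι
  have hc0 : PowerSeries.constantCoeff ω = ι := by
    rw [← PowerSeries.coeff_zero_eq_constantCoeff]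
    exact AT.coeff_zero_omega hω
  have hc0' : PowerSeries.constantCoeff ω ≠ 0 := by rw [hc0]; exact hι0
  have hωne : ω ≠ 0 := by
    intro h
    rw [h, map_zero] at hc0
    exact hι0 hc0.symm
  obtain ⟨F, hF⟩ := AT.exists_frob (Fq := Fq) (Cinf := Cinf)
  have htwω := AT.tw_omega θc ι hθ hι ω hω
  have hXne : (PowerSeries.X - PowerSeries.C θc) ≠ 0 := by
    intro h
    have h1 := congrArg (PowerSeries.coeff 1) h
    rw [map_sub, PowerSeries.coeff_one_X, PowerSeries.coeff_C, if_neg one_ne_zero,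
      sub_zero, map_zero] at h1
    exact one_ne_zero h1
  constructor
  · rintro ⟨hT, heq⟩
    set f : PowerSeries Cinf := φ * ω⁻¹ with hfdef
    have hφf : φ = f * ω := by
      rw [hfdef, mul_assoc, PowerSeries.inv_mul_cancel ω hc0', mul_one]
    have htwf : PowerSeries.map F f = f := by
      have e1 : PowerSeries.map F f * ((PowerSeries.X - PowerSeries.C θc) * ω) =
          (PowerSeries.X - PowerSeries.C θc) * (f * ω) := by
        calc PowerSeries.map F f * ((PowerSeries.X - PowerSeries.C θc) * ω)
            = PowerSeries.map F f * tw Fq Cinf ω := by rw [htwω]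
          _ = PowerSeries.map F f * PowerSeries.map F ω := by rw [AT.tw_map hF]
          _ = PowerSeries.map F (f * ω) := (map_mul _ _ _).symm
          _ = PowerSeries.map F φ := by rw [← hφf]
          _ = tw Fq Cinf φ := (AT.tw_map hF φ).symm
          _ = (PowerSeries.X - PowerSeries.C θc) * φ := heq
          _ = (PowerSeries.X - PowerSeries.C θc) * (f * ω) := by rw [hφf]
      have e2 : PowerSeries.map F f * ((PowerSeries.X - PowerSeries.C θc) * ω) =
          f * ((PowerSeries.X - PowerSeries.C θc) * ω) := by rw [e1]; ring
      exact mul_right_cancel₀ (mul_ne_zero hXne hωne) e2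
    have hfix : ∀ n, (PowerSeries.coeff n f) ^ q = PowerSeries.coeff n f := by
      intro n
      have h1 := congrArg (PowerSeries.coeff n) htwf
      rwa [PowerSeries.coeff_map, hF] at h1
    choose e he using fun n => AT.root_pow_card (Fq := Fq) (PowerSeries.coeff n f) (hfix n)
    have hf1 : ∀ k, ‖PowerSeries.coeff k f‖ ≤ 1 := fun k => by
      rw [← he k]; exact AT.norm_algebraMap_le _
    have hrι : (0:ℝ) < ‖ι‖ := norm_pos_iff.mpr hι0
    have hqinv1 : (q:ℝ)⁻¹ < 1 := by rw [inv_lt_one_iff₀]; right; exact hqR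
    have hεpos : 0 < ‖ι‖ * (1 - (q:ℝ)⁻¹) := mul_pos hrι (by linarith)
    have hdom : ∀ n, PowerSeries.coeff n f ≠ 0 →
        ‖ι‖ * (1 - (q:ℝ)⁻¹) ≤ ‖PowerSeries.coeff n φ‖ := by
      intro n hfn
      have hsplit : PowerSeries.coeff n φ =
          (∑ k ∈ Finset.range n,
            PowerSeries.coeff k f * PowerSeries.coeff (n - k) ω)
          + PowerSeries.coeff n f * ι := by
        rw [hφf, PowerSeries.coeff_mul, Finset.Nat.sum_antidiagonal_eq_sum_range_succ
          (fun i j => PowerSeries.coeff i f * PowerSeries.coeff j ω) n,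
          Finset.sum_range_succ, Nat.sub_self, AT.coeff_zero_omega hω]
      have hS : ‖∑ k ∈ Finset.range n,
          PowerSeries.coeff k f * PowerSeries.coeff (n - k) ω‖ ≤ ‖ι‖ * (q:ℝ)⁻¹ := by
        apply IsUltrametricDist.norm_sum_le_of_forall_le_of_nonneg (by positivity)
        intro k hk
        rw [Finset.mem_range] at hk
        rw [norm_mul]
        calc ‖PowerSeries.coeff k f‖ * ‖PowerSeries.coeff (n - k) ω‖
            ≤ 1 * (‖ι‖ * ((q:ℝ)⁻¹) ^ (n - k)) :=
              mul_le_mul (hf1 k) (AT.norm_coeff_omega_le hθ hω _) (norm_nonneg _) zero_le_one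
          _ = ‖ι‖ * ((q:ℝ)⁻¹) ^ (n - k) := one_mul _
          _ ≤ ‖ι‖ * ((q:ℝ)⁻¹) ^ 1 := by
              apply mul_le_mul_of_nonneg_left _ (norm_nonneg _)
              exact pow_le_pow_of_le_one (by positivity) hqinv1.le (by omega)
          _ = ‖ι‖ * (q:ℝ)⁻¹ := by rw [pow_one]
      have hen : e n ≠ 0 := by
        intro h0
        apply hfn
        rw [← he n, h0, map_zero]
      have hlast : ‖PowerSeries.coeff n f * ι‖ = ‖ι‖ := by
        rw [norm_mul, ← he n, AT.norm_algebraMap_eq _ hen, one_mul]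
      have htri : ‖PowerSeries.coeff n f * ι‖ - ‖PowerSeries.coeff n φ‖ ≤
          ‖∑ k ∈ Finset.range n,
            PowerSeries.coeff k f * PowerSeries.coeff (n - k) ω‖ := by
        have h6 := norm_sub_norm_le (PowerSeries.coeff n f * ι) (PowerSeries.coeff n φ)
        rw [hsplit] at h6 ⊢
        calc ‖PowerSeries.coeff n f * ι‖ - ‖_ + PowerSeries.coeff n f * ι‖
            ≤ ‖PowerSeries.coeff n f * ι - (_ + PowerSeries.coeff n f * ι)‖ :=
              norm_sub_norm_le _ _
          _ = ‖-(∑ k ∈ Finset.range n,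
              PowerSeries.coeff k f * PowerSeries.coeff (n - k) ω)‖ := by ring_nf
          _ = _ := norm_neg _
      rw [hlast] at htri
      linarith
    have hT' : Tendsto (fun n => PowerSeries.coeff n φ) atTop (nhds 0) := hT
    rw [Metric.tendsto_atTop] at hT'
    obtain ⟨n₀, hn₀⟩ := hT' _ hεpos
    have hvan : ∀ k, n₀ ≤ k → PowerSeries.coeff k f = 0 := by
      intro k hk
      by_contra hne
      have h7 := hdom k hne
      have h5 := hn₀ k hk
      rw [dist_zero_right] at h5
      linarith
    set p : Polynomial Fq := ∑ k ∈ Finset.range n₀, Polynomial.C (e k) * Polynomial.X ^ k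
      with hpdef
    have hpf : ((p.map (algebraMap Fq Cinf) : Polynomial Cinf) : PowerSeries Cinf) = f := by
      ext k
      rw [Polynomial.coeff_coe, Polynomial.coeff_map]
      have hpk : p.coeff k = if k ∈ Finset.range n₀ then e k else 0 := by
        rw [hpdef, Polynomial.finset_sum_coeff]
        simp_rw [Polynomial.coeff_C_mul, Polynomial.coeff_X_pow, mul_ite, mul_one, mul_zero]
        exact Finset.sum_ite_eq (Finset.range n₀) k e
      rcases lt_or_ge k n₀ with h | h
      · rw [hpk, if_pos (Finset.mem_range.mpr h), he k]
      · rw [hpk, if_neg (by simpa using not_lt.mpr h), map_zero, hvan k h]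
    refine ⟨p, ?_, ?_⟩
    · show φ = ((p.map (algebraMap Fq Cinf) : Polynomial Cinf) : PowerSeries Cinf) * ω
      rw [hpf]; exact hφf
    · intro p' hp'
      have hp'' : φ = ((p'.map (algebraMap Fq Cinf) : Polynomial Cinf) : PowerSeries Cinf) * ω :=
        hp'
      apply AT.poly_inj (Cinf := Cinf)
      have h8 : ((p'.map (algebraMap Fq Cinf) : Polynomial Cinf) : PowerSeries Cinf) * ω =
          ((p.map (algebraMap Fq Cinf) : Polynomial Cinf) : PowerSeries Cinf) * ω := by
        rw [← hp'', hpf, ← hφf]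
      exact mul_right_cancel₀ hωne h8
  · rintro ⟨p, hp, -⟩
    subst hp
    constructor
    · exact AT.isTate_mul hθ hω _
        (fun k => by
          rw [Polynomial.coeff_coe, Polynomial.coeff_map]
          exact AT.norm_algebraMap_le _)
        (p.natDegree + 1)
        (fun k hk => by
          rw [Polynomial.coeff_coe, Polynomial.coeff_map,
            Polynomial.coeff_eq_zero_of_natDegree_lt (by omega), map_zero])
    · have hfixp : PowerSeries.map F
          ((p.map (algebraMap Fq Cinf) : Polynomial Cinf) : PowerSeries Cinf) =
          ((p.map (algebraMap Fq Cinf) : Polynomial Cinf) : PowerSeries Cinf) := by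
        ext n
        rw [PowerSeries.coeff_map, Polynomial.coeff_coe, Polynomial.coeff_map, hF,
          ← map_pow, FiniteField.pow_card]
      rw [AT.tw_map hF, map_mul, hfixp, ← AT.tw_map hF, htwω]
      ring
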